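/- Let (S, ⊑) be a cpo, let H be a nonzero finite-dimensional complex Hilbert space, let (Pᵢ, fᵢ)_{i≥1} be a monotone S-labeled sequence of partitions of H, and let P∞ be the eventual supremum of (Pᵢ). Let p∞ ∈ P∞ and let p₁, p₂, … be a sequence of cells with pᵢ ∈ Pᵢ, pᵢ not orthogonal to p_{i+1} for all i, and pᵢ not orthogonal to p∞ for all i. Then for every positive integer n there exists an integer m ≥ n such that fₙ(pₙ) ⊑ f_m(p) for every cell p ∈ P_m that is not orthogonal to p∞. -/

import Mathlib

variable {H : Type*} [NormedAddCommGroup H] [InnerProductSpace ℂ H]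

/-- Two subspaces of a complex inner product space are orthogonal when every vector of
one is orthogonal to every vector of the other. -/
def Orth (p q : Submodule ℂ H) : Prop :=
  ∀ x ∈ p, ∀ y ∈ q, @inner ℂ H _ x y = 0

/-- A partition of `H` is a set of nonzero closed subspaces of `H` that are pairwise
orthogonal and whose supremum in the complete lattice of closed subspaces of `H`
(i.e. the topological closure of the submodule supremum) is all of `H`. -/
def IsPartition (P : Set (Submodule ℂ H)) : Prop :=
  (∀ p ∈ P, p ≠ ⊥) ∧
  (∀ p ∈ P, IsClosed (p : Set H)) ∧
  (∀ p ∈ P, ∀ q ∈ P, p ≠ q → Orth p q) ∧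
  (sSup P).topologicalClosure = ⊤

/-- `P₁` refines `P₂` when every cell of `P₁` is contained in some cell of `P₂`. -/
def Refines (P₁ P₂ : Set (Submodule ℂ H)) : Prop :=
  ∀ p ∈ P₁, ∃ q ∈ P₂, p ≤ q

/-- A multicell of a partition `P` is the supremum (in the lattice of closed subspaces)
of a possibly empty subset of `P`. -/
def IsMulticell (P : Set (Submodule ℂ H)) (m : Submodule ℂ H) : Prop :=
  ∃ C ⊆ P, m = (sSup C).topologicalClosure

variable {S : Type*} [PartialOrder S]

/-- A monotone `S`-labeled sequence of partitions of `H`: a sequence `P i` of partitions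
together with labelings `f i` of their cells such that for `i ≤ j` and non-orthogonal cells
`p ∈ P i`, `q ∈ P j` one has `f i p ⊑ f j q`. -/
def MonotoneLabeled (P : ℕ → Set (Submodule ℂ H)) (f : ℕ → Submodule ℂ H → S) : Prop :=
  ∀ i j : ℕ, i ≤ j → ∀ p ∈ P i, ∀ q ∈ P j, ¬ Orth p q → f i p ≤ f j q

/-- A partition `Pinf` is the eventual supremum of the sequence `P` if, for all sufficiently
large `n`, `Pinf` is the least upper bound of `{P i : i ≥ n}` in the refinement order. -/
def IsEventualSup (P : ℕ → Set (Submodule ℂ H)) (Pinf : Set (Submodule ℂ H)) : Prop :=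
  ∃ N : ℕ, ∀ n, N ≤ n →
    (∀ i, n ≤ i → Refines (P i) Pinf) ∧
      ∀ Q : Set (Submodule ℂ H), IsPartition Q →
        (∀ i, n ≤ i → Refines (P i) Q) → Refines Pinf Q

lemma orth_iff_le_orthogonal {p q : Submodule ℂ H} : Orth p q ↔ q ≤ pᗮ := by
  constructor
  · intro h y hy
    rw [Submodule.mem_orthogonal]
    exact fun x hx => h x hx y hy
  · intro h x hx y hy
    exact (Submodule.mem_orthogonal _ _).mp (h hy) x hx

lemma Orth.symm' {p q : Submodule ℂ H} (h : Orth p q) : Orth q p :=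
  fun x hx y hy => inner_eq_zero_symm.mpr (h y hy x hx)

lemma orth_mono {p p' q q' : Submodule ℂ H} (hp : p' ≤ p) (hq : q' ≤ q) (h : Orth p q) :
    Orth p' q' := fun x hx y hy => h x (hp hx) y (hq hy)

lemma orth_self {p : Submodule ℂ H} (h : Orth p p) : p = ⊥ := by
  ext x
  simp only [Submodule.mem_bot]
  exact ⟨fun hx => inner_self_eq_zero.mp (h x hx x hx), fun hx => hx ▸ p.zero_mem⟩

lemma orth_sSup {c : Submodule ℂ H} {C : Set (Submodule ℂ H)}
    (h : ∀ q ∈ C, Orth c q) : Orth c (sSup C) :=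
  orth_iff_le_orthogonal.mpr (sSup_le fun q hq => orth_iff_le_orthogonal.mp (h q hq))

lemma le_sSup_of_orth_compl [FiniteDimensional ℂ H] {P D : Set (Submodule ℂ H)} (hD : D ⊆ P)
    (hsup : sSup P = ⊤)
    (horth : ∀ p ∈ P, ∀ q ∈ P, p ≠ q → Orth p q)
    {c : Submodule ℂ H} (hc : ∀ q ∈ P, q ∉ D → Orth c q) :
    c ≤ sSup D := by
  set A := sSup (P \ D) with hA
  have hAB : A ⊔ sSup D = ⊤ := by
    rw [hA, ← sSup_union, Set.diff_union_of_subset hD, hsup]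
  have hBA : sSup D ≤ Aᗮ := by
    apply sSup_le
    intro d hd
    rw [← orth_iff_le_orthogonal]
    refine (orth_sSup fun q hq => ?_).symm'
    exact (horth q hq.1 d (hD hd) (by rintro rfl; exact hq.2 hd)).symm'
  have hc' : c ≤ Aᗮ := by
    rw [← orth_iff_le_orthogonal]
    exact (orth_sSup fun q hq => hc q hq.1 hq.2).symm'
  have hAeq : Aᗮ = sSup D := by
    have h1 : A ⊓ Aᗮ ⊔ sSup D = Aᗮ ⊓ (A ⊔ sSup D) := by
      rw [inf_comm A Aᗮ]
      exact inf_sup_assoc_of_le _ hBA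
    rw [hAB, inf_top_eq, Submodule.inf_orthogonal_eq_bot, bot_sup_eq] at h1
    exact h1.symm
  exact hAeq ▸ hc'

lemma partition_sSup_eq_top [FiniteDimensional ℂ H] {P : Set (Submodule ℂ H)}
    (h : IsPartition P) : sSup P = ⊤ :=
  le_antisymm le_top (h.2.2.2 ▸
    Submodule.topologicalClosure_minimal _ le_rfl (sSup P).closed_of_finiteDimensional)

/-- Let `S` be a cpo, `H` a nonzero finite-dimensional complex Hilbert space,
`(P i, f i)` a monotone `S`-labeled sequence of partitions of `H`, and `Pinf` the eventual
supremum of `(P i)`.  Let `pinf ∈ Pinf` and let `p i ∈ P i` be cells with consecutive cells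
not orthogonal and each `p i` not orthogonal to `pinf`.  Then for every `n` there exists
`m ≥ n` such that `f n (p n) ⊑ f m c` for every cell `c ∈ P m` not orthogonal to `pinf`. -/
theorem exists_index_label_above
    (hcpo : ∀ g : ℕ → S, Monotone g → ∃ s, IsLUB (Set.range g) s)
    [FiniteDimensional ℂ H] [Nontrivial H]
    (P : ℕ → Set (Submodule ℂ H)) (hP : ∀ i, IsPartition (P i))
    (f : ℕ → Submodule ℂ H → S) (hf : MonotoneLabeled P f)
    (Pinf : Set (Submodule ℂ H)) (hPinf : IsPartition Pinf)
    (hev : IsEventualSup P Pinf)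
    (pinf : Submodule ℂ H) (hpinf : pinf ∈ Pinf)
    (p : ℕ → Submodule ℂ H) (hp : ∀ i, p i ∈ P i)
    (hchain : ∀ i, ¬ Orth (p i) (p (i + 1)))
    (hporth : ∀ i, ¬ Orth (p i) pinf)
    (n : ℕ) :
    ∃ m : ℕ, n ≤ m ∧ ∀ c ∈ P m, ¬ Orth c pinf → f n (p n) ≤ f m c := by
  classical
  by_contra hcon
  push_neg at hcon
  obtain ⟨N, hN⟩ := hev
  -- partitions have full supremum in finite dimension
  have hsupTop : ∀ i, sSup (P i) = ⊤ := fun i => partition_sSup_eq_top (hP i)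
  -- labels along the chain are monotone
  have hgood : ∀ i, n ≤ i → f n (p n) ≤ f i (p i) := by
    intro i hi
    induction i, hi using Nat.le_induction with
    | base => exact le_rfl
    | succ i hi ih =>
      exact ih.trans (hf i (i + 1) (Nat.le_succ i) _ (hp i) _ (hp (i + 1)) (hchain i))
  have href : ∀ i, N ≤ i → Refines (P i) Pinf := fun i hi => (hN N le_rfl).1 i hi
  have hle_pinf : ∀ i, N ≤ i → ∀ c ∈ P i, ¬ Orth c pinf → c ≤ pinf := by
    intro i hi c hc hco
    obtain ⟨q, hq, hcq⟩ := href i hi c hc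
    by_cases hqp : q = pinf
    · exact hqp ▸ hcq
    · exact absurd (orth_mono hcq le_rfl (hPinf.2.2.1 q hq pinf hpinf hqp)) hco
  set n₁ : ℕ := max n N with hn₁
  set Bad : ℕ → Set (Submodule ℂ H) :=
    fun m => {c | c ∈ P m ∧ ¬ Orth c pinf ∧ ¬ f n (p n) ≤ f m c} with hBadDef
  set B : ℕ → Submodule ℂ H := fun m => sSup (Bad m) with hBDef
  -- the spans of bad cells are decreasing
  have hBmono : ∀ i j, n₁ ≤ i → i ≤ j → B j ≤ B i := by
    intro i j hi hij
    apply sSup_le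
    intro c' hc'
    have hc'pinf : c' ≤ pinf :=
      hle_pinf j (le_trans (le_trans (le_max_right n N) hi) hij) c' hc'.1 hc'.2.1
    apply le_sSup_of_orth_compl (fun x hx => hx.1) (hsupTop i) (hP i).2.2.1
    intro q hq hqbad
    by_contra hno
    apply hqbad
    refine ⟨hq, ?_, ?_⟩
    · intro horth
      exact hno ((orth_mono le_rfl hc'pinf horth).symm')
    · intro hle
      have hqc' : ¬ Orth q c' := fun h => hno h.symm'
      exact hc'.2.2 (hle.trans (hf i j hij q hq c' hc'.1 hqc'))
  -- bad cells exist at every stage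
  have hBadne : ∀ m, n ≤ m → (Bad m).Nonempty := by
    intro m hm
    obtain ⟨c, hc, hco, hle⟩ := hcon m hm
    exact ⟨c, hc, hco, hle⟩
  -- the decreasing sequence of subspaces stabilizes
  have hrange : (Set.range fun k => Module.finrank ℂ (B (n₁ + k))).Nonempty :=
    ⟨_, ⟨0, rfl⟩⟩
  obtain ⟨k₀, hk₀⟩ := Nat.sInf_mem hrange
  set M : ℕ := n₁ + k₀ with hM
  have hMn₁ : n₁ ≤ M := Nat.le_add_right _ _
  have hMn : n ≤ M := le_trans (le_max_left n N) hMn₁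
  have hMN : N ≤ M := le_trans (le_max_right n N) hMn₁
  have hBeq : ∀ j, M ≤ j → B j = B M := by
    intro j hj
    refine Submodule.eq_of_le_of_finrank_le (hBmono M j hMn₁ hj) ?_
    refine le_trans (le_of_eq hk₀) (Nat.sInf_le ⟨j - n₁, ?_⟩)
    show Module.finrank ℂ (B (n₁ + (j - n₁))) = Module.finrank ℂ (B j)
    have hjj : n₁ + (j - n₁) = j := by omega
    rw [hjj]
  set Bb : Submodule ℂ H := B M with hBb
  have hBbpinf : Bb ≤ pinf := by
    apply sSup_le
    intro c hc
    exact hle_pinf M hMN c hc.1 hc.2.1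
  have hBbne : Bb ≠ ⊥ := by
    obtain ⟨c, hc⟩ := hBadne M hMn
    intro hb
    exact (hP M).1 c hc.1 (le_bot_iff.mp (hb ▸ le_sSup hc))
  -- cells not in Bad are orthogonal to Bb
  have hgoodOrth : ∀ m, M ≤ m → ∀ c ∈ P m, c ∉ Bad m → Orth c Bb := by
    intro m hm c hc hcbad
    rw [← hBeq m hm]
    exact orth_sSup fun d hd => (hP m).2.2.1 c hc d hd.1 (by rintro rfl; exact hcbad hd)
  have hpMgood : p M ∉ Bad M := fun h => h.2.2 (hgood M hMn)
  have hpMorth : Orth (p M) Bb := hgoodOrth M le_rfl (p M) (hp M) hpMgood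
  have hpMle : p M ≤ pinf ⊓ Bbᗮ :=
    le_inf (hle_pinf M hMN (p M) (hp M) (hporth M))
      (orth_iff_le_orthogonal.mp hpMorth.symm')
  have hpMne : p M ≠ ⊥ := (hP M).1 (p M) (hp M)
  -- the refining partition
  set Q : Set (Submodule ℂ H) := (Pinf \ {pinf}) ∪ {Bb, pinf ⊓ Bbᗮ} with hQDef
  have hBbmem : Bb ∈ Q := Or.inr (Or.inl rfl)
  have hB'mem : pinf ⊓ Bbᗮ ∈ Q := Or.inr (Or.inr rfl)
  have hQorth : ∀ a ∈ Q, ∀ b ∈ Q, a ≠ b → Orth a b := by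
    have hcross : ∀ a ∈ Pinf \ {pinf}, ∀ b, b ≤ pinf → Orth a b := by
      intro a ha b hb
      exact orth_mono le_rfl hb (hPinf.2.2.1 a ha.1 pinf hpinf ha.2)
    have hBB' : Orth Bb (pinf ⊓ Bbᗮ) :=
      orth_iff_le_orthogonal.mpr inf_le_right
    rintro a (ha | ha) b (hb | hb) hab
    · exact hPinf.2.2.1 a ha.1 b hb.1 fun h => hab (by simpa using h)
    · rcases hb with rfl | rfl
      · exact hcross a ha _ hBbpinf
      · exact hcross a ha _ inf_le_left
    · rcases ha with rfl | rfl
      · exact (hcross b hb _ hBbpinf).symm'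
      · exact (hcross b hb _ inf_le_left).symm'
    · rcases ha with rfl | rfl <;> rcases hb with rfl | rfl
      · exact absurd rfl hab
      · exact hBB'
      · exact hBB'.symm'
      · exact absurd rfl hab
  have hQpart : IsPartition Q := by
    refine ⟨?_, ?_, hQorth, ?_⟩
    · rintro q (hq | hq)
      · exact hPinf.1 q hq.1
      · rcases hq with rfl | rfl
        · exact hBbne
        · intro h
          exact hpMne (le_bot_iff.mp (h ▸ hpMle))
    · intro q _
      exact q.closed_of_finiteDimensional
    · have hsplit : Bb ⊔ Bbᗮ ⊓ pinf = pinf :=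
        Submodule.sup_orthogonal_inf_of_hasOrthogonalProjection hBbpinf
      have htop : sSup Q = ⊤ := by
        refine le_antisymm le_top ?_
        rw [← partition_sSup_eq_top hPinf]
        apply sSup_le
        intro q hq
        by_cases hqp : q = pinf
        · subst hqp
          rw [← hsplit]
          refine sup_le (le_sSup hBbmem) (le_trans (le_of_eq (inf_comm _ _)) (le_sSup hB'mem))
        · exact le_sSup (Or.inl ⟨hq, hqp⟩)
      rw [htop]
      exact le_antisymm le_top (Submodule.le_topologicalClosure _)
  -- every P i with i large refines Q
  have hrefQ : ∀ i, max N M ≤ i → Refines (P i) Q := by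
    intro i hi c hc
    have hiN : N ≤ i := le_trans (le_max_left _ _) hi
    have hiM : M ≤ i := le_trans (le_max_right _ _) hi
    by_cases hco : Orth c pinf
    · obtain ⟨q, hq, hcq⟩ := href i hiN c hc
      have hqne : q ≠ pinf := by
        rintro rfl
        exact (hP i).1 c hc (orth_self (orth_mono le_rfl hcq hco))
      exact ⟨q, Or.inl ⟨hq, hqne⟩, hcq⟩
    · by_cases hcb : c ∈ Bad i
      · exact ⟨Bb, hBbmem, le_trans (le_sSup hcb) (le_of_eq (hBeq i hiM))⟩
      · refine ⟨pinf ⊓ Bbᗮ, hB'mem, le_inf (hle_pinf i hiN c hc hco) ?_⟩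
        exact orth_iff_le_orthogonal.mp (hgoodOrth i hiM c hc hcb).symm'
  -- Pinf refines Q, contradiction
  have hPinfQ : Refines Pinf Q :=
    (hN (max N M) (le_max_left _ _)).2 Q hQpart hrefQ
  obtain ⟨q, hq, hle⟩ := hPinfQ pinf hpinf
  rcases hq with hq | hq
  · exact hPinf.1 pinf hpinf
      (orth_self (orth_mono hle le_rfl (hPinf.2.2.1 q hq.1 pinf hpinf hq.2)))
  · rcases hq with rfl | rfl
    · -- pinf ≤ Bb : then pinf ⊓ Bbᗮ = ⊥, but p M lives there
      apply hpMne
      rw [← le_bot_iff, ← Submodule.inf_orthogonal_eq_bot Bb]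
      exact le_trans hpMle (inf_le_inf_right _ hle)
    · -- pinf ≤ pinf ⊓ Bbᗮ : then Bb ≤ Bbᗮ, so Bb = ⊥
      apply hBbne
      rw [← le_bot_iff, ← Submodule.inf_orthogonal_eq_bot Bb]
      exact le_inf le_rfl (le_trans hBbpinf (le_trans hle inf_le_right))
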